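/- arXiv:1011.1799 — 5 statements merged into one kernel-verified Lean document; each statement's English description precedes it below -/
import Mathlib

section
/- If \tilde{K} admits a positive invariant probability measure \tilde{\pi}, then the sequence (K_n) is c-stable with respect to μ_0 = \tilde{\pi} with c = max over x ∈ V and i of \tilde{\pi}(g^i x)/\tilde{\pi}(x); that is, for all n ≥ 0 and all x ∈ V, c^{-1} ≤ μ_n(x)/μ_0(x) ≤ c where μ_n = μ_0 K_{0,n}. -/
open BigOperators Finset

def Kseq {V : Type*} [Fintype V] (K : Matrix V V ℝ) (g : Equiv.Perm V) (i : ℕ) :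
    Matrix V V ℝ :=
  Matrix.of fun x y => K ((g ^ (i - 1)) x) ((g ^ (i - 1)) y)

def Kcomp {V : Type*} [Fintype V] [DecidableEq V] (K : Matrix V V ℝ) (g : Equiv.Perm V) :
    ℕ → Matrix V V ℝ
  | 0 => 1
  | n + 1 => Kcomp K g n * Kseq K g (n + 1)

def tilde {V : Type*} [Fintype V] (K : Matrix V V ℝ) (g : Equiv.Perm V) : Matrix V V ℝ :=
  Matrix.of fun x y => K x (g.symm y)

lemma key_mu {V : Type*} [Fintype V] [DecidableEq V] (K : Matrix V V ℝ) (g : Equiv.Perm V)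
    (π : V → ℝ)
    (hinv : ∀ y, ∑ x, π x * tilde K g x y = π y) :
    ∀ (n : ℕ) (x : V), Matrix.vecMul π (Kcomp K g n) x = π ((g ^ n) x) := by
  intro n
  induction n with
  | zero => intro x; simp [Kcomp]
  | succ n ih =>
    intro x
    have h1 : Matrix.vecMul π (Kcomp K g (n + 1)) x
        = ∑ y, Matrix.vecMul π (Kcomp K g n) y * Kseq K g (n + 1) y x := by
      rw [show Kcomp K g (n + 1) = Kcomp K g n * Kseq K g (n + 1) from rfl,
        ← Matrix.vecMul_vecMul]
      rfl
    rw [h1]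
    have h2 : ∀ y, Matrix.vecMul π (Kcomp K g n) y = π ((g ^ n) y) := ih
    simp only [h2, Kseq, Matrix.of_apply, Nat.add_sub_cancel]
    have h3 : ∑ y, π ((g ^ n) y) * K ((g ^ n) y) ((g ^ n) x)
        = ∑ z, π z * K z ((g ^ n) x) :=
      Fintype.sum_equiv (g ^ n) _ _ (fun y => rfl)
    rw [h3]
    have h4 := hinv (g ((g ^ n) x))
    simp only [tilde, Matrix.of_apply, Equiv.symm_apply_apply] at h4
    rw [h4]
    congr 1
    rw [← Equiv.Perm.mul_apply, ← pow_succ']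

/-- Corollary 3.7: if K̃ has a positive invariant probability measure π̃, then
(K_n) is c-stable w.r.t. μ₀ = π̃ with c = max_{x,i} π̃(gⁱx)/π̃(x). -/
theorem stmt3 {V : Type*} [Fintype V] [DecidableEq V] (K : Matrix V V ℝ) (g : Equiv.Perm V)
    (hK0 : ∀ x y, 0 ≤ K x y) (hK1 : ∀ x, ∑ y, K x y = 1)
    (π : V → ℝ) (hπpos : ∀ x, 0 < π x) (hπ1 : ∑ x, π x = 1)
    (hinv : ∀ y, ∑ x, π x * tilde K g x y = π y)
    (c : ℝ) (hc : IsGreatest {r : ℝ | ∃ (x : V) (i : ℕ), r = π ((g ^ i) x) / π x} c) :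
    ∀ (n : ℕ) (x : V),
      c⁻¹ ≤ Matrix.vecMul π (Kcomp K g n) x / π x ∧
        Matrix.vecMul π (Kcomp K g n) x / π x ≤ c := by
  intro n x
  rw [key_mu K g π hinv n x]
  have hub : ∀ (y : V) (i : ℕ), π ((g ^ i) y) / π y ≤ c := fun y i => hc.2 ⟨y, i, rfl⟩
  have upper : π ((g ^ n) x) / π x ≤ c := hub x n
  -- c > 0
  have hc1 : (1 : ℝ) ≤ c := by
    have := hub x 0
    simpa [div_self (hπpos x).ne'] using this
  have hcpos : 0 < c := lt_of_lt_of_le one_pos hc1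
  refine ⟨?_, upper⟩
  set a := π ((g ^ n) x) / π x with ha
  have hapos : 0 < a := div_pos (hπpos _) (hπpos x)
  have hinvle : a⁻¹ ≤ c := by
    have hk : 1 ≤ orderOf g := (orderOf_pos g)
    have hx : (g ^ (n * (orderOf g - 1))) ((g ^ n) x) = x := by
      have : (g ^ (n * (orderOf g - 1))) * (g ^ n) = 1 := by
        rw [← pow_add]
        have : n * (orderOf g - 1) + n = n * orderOf g := by
          have h := Nat.succ_pred_eq_of_pos (orderOf_pos g)
          nlinarith [Nat.sub_add_cancel hk]
        rw [this, mul_comm, pow_mul, pow_orderOf_eq_one, one_pow]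
      calc (g ^ (n * (orderOf g - 1))) ((g ^ n) x)
          = ((g ^ (n * (orderOf g - 1))) * (g ^ n)) x := rfl
        _ = x := by rw [this]; rfl
    have := hub ((g ^ n) x) (n * (orderOf g - 1))
    rw [hx] at this
    have haeq : a⁻¹ = π x / π ((g ^ n) x) := by
      rw [ha, inv_div]
    rw [haeq]
    exact this
  calc c⁻¹ ≤ (a⁻¹)⁻¹ := inv_anti₀ (inv_pos.mpr hapos) hinvle
    _ = a := inv_inv a
end

section
/- If K is irreducible and min_{x∈V} K(x,x) > 0, then for any bijection g of V, the kernel \tilde{K}(x,y) = K(x,g^{-1}y) is irreducible and aperiodic, i.e., there exists n with \tilde{K}^n(x,y) > 0 for all x,y. -/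
open BigOperators Finset

/-- Proposition 3.10: if K is irreducible with positive diagonal, then for any
bijection g the kernel K̃ is irreducible and aperiodic. -/
theorem stmt5 {V : Type*} [Fintype V] [DecidableEq V] [Nonempty V]
    (K : Matrix V V ℝ)
    (hK0 : ∀ x y, 0 ≤ K x y) (hK1 : ∀ x, ∑ y, K x y = 1)
    (hirr : ∀ x y : V, ∃ n : ℕ, 0 < (K ^ n) x y)
    (hdiag : ∀ x, 0 < K x x)
    (g : Equiv.Perm V) :
    ∃ n : ℕ, ∀ x y : V, 0 < (tilde K g ^ n) x y := by
  classical
  -- minimal diagonal entry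
  set ε : ℝ := Finset.univ.inf' Finset.univ_nonempty (fun x => K x x) with hεdef
  have hε : 0 < ε := by
    rw [hεdef, Finset.lt_inf'_iff]
    intro x _
    exact hdiag x
  have hεle : ∀ x, ε ≤ K x x := fun x =>
    Finset.inf'_le _ (Finset.mem_univ x)
  -- nonnegativity of powers of K
  have hKpow : ∀ n : ℕ, ∀ x y, 0 ≤ (K ^ n) x y := by
    intro n
    induction n with
    | zero => intro x y; simp [Matrix.one_apply]; positivity
    | succ n ih =>
      intro x y
      rw [pow_succ, Matrix.mul_apply]
      exact Finset.sum_nonneg fun z _ => mul_nonneg (ih x z) (hK0 z y)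
  -- nonnegativity of tilde and its powers
  have htK0 : ∀ x y, 0 ≤ tilde K g x y := fun x y => hK0 x (g.symm y)
  have htpow : ∀ n : ℕ, ∀ x y, 0 ≤ (tilde K g ^ n) x y := by
    intro n
    induction n with
    | zero => intro x y; simp [Matrix.one_apply]; positivity
    | succ n ih =>
      intro x y
      rw [pow_succ, Matrix.mul_apply]
      exact Finset.sum_nonneg fun z _ => mul_nonneg (ih x z) (htK0 z y)
  -- positivity of K powers is monotone in the exponent
  have hmono : ∀ x y : V, ∀ n m : ℕ, n ≤ m → 0 < (K ^ n) x y → 0 < (K ^ m) x y := by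
    intro x y n m hnm h
    induction m with
    | zero =>
      have : n = 0 := Nat.le_zero.mp hnm
      subst this; exact h
    | succ m ih =>
      rcases Nat.lt_or_ge n (m + 1) with hlt | hge
      · have h' := ih (Nat.lt_succ_iff.mp hlt)
        rw [pow_succ, Matrix.mul_apply]
        refine Finset.sum_pos' (fun z _ => mul_nonneg (hKpow m x z) (hK0 z y)) ?_
        exact ⟨y, Finset.mem_univ y, mul_pos h' (hdiag y)⟩
      · have : n = m + 1 := le_antisymm hnm hge
        subst this; exact h
  -- a uniform N with K^N entrywise positive
  choose f hf using hirr
  set N : ℕ := Finset.univ.sup (fun p : V × V => f p.1 p.2) with hNdef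
  have hN : ∀ x y, 0 < (K ^ N) x y := by
    intro x y
    exact hmono x y (f x y) N
      (Finset.le_sup (f := fun p : V × V => f p.1 p.2) (Finset.mem_univ (x, y))) (hf x y)
  -- order of g
  set o : ℕ := orderOf g with hodef
  have ho : 0 < o := orderOf_pos g
  -- key claim A: (tilde)^(j+1) x (g^(j+1) w) ≥ ε^j * K x w
  have hA : ∀ j : ℕ, ∀ x w : V, ε ^ j * K x w ≤ (tilde K g ^ (j + 1)) x ((g ^ (j + 1)) w) := by
    intro j
    induction j with
    | zero =>
      intro x w
      simp only [pow_zero, one_mul, zero_add, pow_one]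
      simp [tilde]
    | succ j ih =>
      intro x w
      have hstep : (g ^ (j + 2)) w = g ((g ^ (j + 1)) w) := by
        rw [pow_succ' g (j + 1)]
        rfl
      have hdiagent : (tilde K g) ((g ^ (j + 1)) w) ((g ^ (j + 2)) w)
          = K ((g ^ (j + 1)) w) ((g ^ (j + 1)) w) := by
        simp [tilde, hstep, Equiv.symm_apply_apply]
      rw [pow_succ (tilde K g) (j + 1), Matrix.mul_apply]
      calc ε ^ (j + 1) * K x w = (ε ^ j * K x w) * ε := by ring
        _ ≤ (tilde K g ^ (j + 1)) x ((g ^ (j + 1)) w) *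
              (tilde K g) ((g ^ (j + 1)) w) ((g ^ (j + 2)) w) := by
            rw [hdiagent]
            exact mul_le_mul (ih x w) (hεle _) (le_of_lt hε)
              (htpow (j + 1) x ((g ^ (j + 1)) w))
        _ ≤ ∑ z, (tilde K g ^ (j + 1)) x z * (tilde K g) z ((g ^ (j + 2)) w) := by
            refine Finset.single_le_sum (f := fun z =>
              (tilde K g ^ (j + 1)) x z * (tilde K g) z ((g ^ (j + 2)) w)) ?_
              (Finset.mem_univ ((g ^ (j + 1)) w))
            intro z _
            exact mul_nonneg (htpow (j + 1) x z) (htK0 z ((g ^ (j + 2)) w))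
  -- hence tilde^o ≥ ε^(o-1) * K entrywise
  have hAo : ∀ x w : V, ε ^ (o - 1) * K x w ≤ (tilde K g ^ o) x w := by
    intro x w
    have h1 : o - 1 + 1 = o := Nat.succ_pred_eq_of_pos ho
    have h2 : (g ^ o) w = w := by
      rw [hodef, pow_orderOf_eq_one g]; rfl
    have := hA (o - 1) x w
    rwa [h1, h2] at this
  -- claim B: tilde^(o*m) ≥ ε^((o-1)*m) * K^m entrywise
  have hB : ∀ m : ℕ, ∀ x y : V, ε ^ ((o - 1) * m) * (K ^ m) x y ≤ (tilde K g ^ (o * m)) x y := by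
    intro m
    induction m with
    | zero => intro x y; simp [Matrix.one_apply]
    | succ m ih =>
      intro x y
      have hexp : o * (m + 1) = o * m + o := by ring
      have hR : (tilde K g ^ (o * (m + 1))) x y
          = ∑ z, (tilde K g ^ (o * m)) x z * (tilde K g ^ o) z y := by
        rw [hexp, pow_add, Matrix.mul_apply]
      have hL : (K ^ (m + 1)) x y = ∑ z, (K ^ m) x z * K z y := by
        rw [pow_succ, Matrix.mul_apply]
      rw [hL, hR]
      have hterm : ∀ z : V,
          (ε ^ ((o - 1) * m) * (K ^ m) x z) * (ε ^ (o - 1) * K z y)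
            ≤ (tilde K g ^ (o * m)) x z * (tilde K g ^ o) z y := by
        intro z
        exact mul_le_mul (ih x z) (hAo z y)
          (mul_nonneg (le_of_lt (pow_pos hε _)) (hK0 z y))
          (htpow (o * m) x z)
      calc ε ^ ((o - 1) * (m + 1)) * ∑ z, (K ^ m) x z * K z y
          = ∑ z, (ε ^ ((o - 1) * m) * (K ^ m) x z) * (ε ^ (o - 1) * K z y) := by
            rw [Finset.mul_sum]
            refine Finset.sum_congr rfl fun z _ => ?_
            rw [show (o - 1) * (m + 1) = (o - 1) * m + (o - 1) by ring, pow_add]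
            ring
        _ ≤ ∑ z, (tilde K g ^ (o * m)) x z * (tilde K g ^ o) z y :=
            Finset.sum_le_sum fun z _ => hterm z
  refine ⟨o * N, fun x y => ?_⟩
  calc (0:ℝ) < ε ^ ((o - 1) * N) * (K ^ N) x y :=
        mul_pos (pow_pos hε _) (hN x y)
    _ ≤ (tilde K g ^ (o * N)) x y := hB N x y
end

section
/- If K is irreducible on a finite set V with |V| = N and min_x K(x,x) > 0, then K_{0,N}(x,y) > 0 for all x, y ∈ V, where K_{0,N} = K_1⋯K_N with K_i(x,y) = K(g^{i-1}x, g^{i-1}y) for any bijection g of V. -/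
open BigOperators Finset

lemma pow_entry_nonneg {V : Type*} [Fintype V] [DecidableEq V] (K : Matrix V V ℝ)
    (hK0 : ∀ x y, 0 ≤ K x y) : ∀ n x y, 0 ≤ (K ^ n) x y := by
  intro n
  induction n with
  | zero =>
    intro x y
    simp only [pow_zero, Matrix.one_apply]
    split <;> norm_num
  | succ n ih =>
    intro x y
    rw [pow_succ, Matrix.mul_apply]
    exact Finset.sum_nonneg fun z _ => mul_nonneg (ih x z) (hK0 z y)

/-- From irreducibility: any proper nonempty set has an outgoing edge. -/
lemma cross_of_irr {V : Type*} [Fintype V] [DecidableEq V] (K : Matrix V V ℝ)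
    (hK0 : ∀ x y, 0 ≤ K x y) (hirr : ∀ x y : V, ∃ n : ℕ, 0 < (K ^ n) x y)
    (S : Finset V) (hSne : S.Nonempty) (hSU : S ≠ Finset.univ) :
    ∃ u ∈ S, ∃ v, v ∉ S ∧ 0 < K u v := by
  obtain ⟨x, hx⟩ := hSne
  have : ∃ y, y ∉ S := by
    by_contra h
    push_neg at h
    exact hSU (Finset.eq_univ_iff_forall.mpr h)
  obtain ⟨y, hy⟩ := this
  obtain ⟨n, hn⟩ := hirr x y
  clear hSU
  induction n generalizing x with
  | zero =>
    exfalso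
    rw [pow_zero, Matrix.one_apply] at hn
    split at hn
    · exact hy (by rwa [‹x = y›] at hx)
    · exact lt_irrefl 0 hn
  | succ n ih =>
    rw [pow_succ', Matrix.mul_apply] at hn
    have hz : ∃ z, 0 < K x z * (K ^ n) z y := by
      by_contra h
      push_neg at h
      have : ∑ z, K x z * (K ^ n) z y ≤ 0 :=
        Finset.sum_nonpos fun z _ => h z
      linarith
    obtain ⟨z, hz⟩ := hz
    have hxz : 0 < K x z := by
      rcases lt_or_eq_of_le (hK0 x z) with h | h
      · exact h
      · exfalso; rw [← h, zero_mul] at hz; exact lt_irrefl 0 hz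
    by_cases hzS : z ∈ S
    · have hzy : 0 < (K ^ n) z y := by
        rcases lt_or_eq_of_le (pow_entry_nonneg K hK0 n z y) with h | h
        · exact h
        · exfalso; rw [← h, mul_zero] at hz; exact lt_irrefl 0 hz
      exact ih z hzS hzy
    · exact ⟨x, hx, z, hzS, hxz⟩

/-- Product of `card V` matrices, each nonnegative with positive diagonal and
with an edge out of every proper nonempty set, is entrywise positive. -/
lemma prod_pos_aux {V : Type*} [Fintype V] [DecidableEq V]
    (A : ℕ → Matrix V V ℝ) (P : ℕ → Matrix V V ℝ)
    (hP0 : P 0 = 1) (hPs : ∀ n, P (n + 1) = P n * A (n + 1))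
    (hA0 : ∀ i x y, 0 ≤ A i x y) (hAdiag : ∀ i x, 0 < A i x x)
    (hcross : ∀ i (S : Finset V), S.Nonempty → S ≠ Finset.univ →
      ∃ u ∈ S, ∃ v, v ∉ S ∧ 0 < A i u v) :
    ∀ x y, 0 < P (Fintype.card V) x y := by
  classical
  intro x y
  have hPnn : ∀ n a b, 0 ≤ P n a b := by
    intro n
    induction n with
    | zero =>
      intro a b
      rw [hP0, Matrix.one_apply]
      split <;> norm_num
    | succ n ih =>
      intro a b
      rw [hPs, Matrix.mul_apply]
      exact Finset.sum_nonneg fun z _ => mul_nonneg (ih a z) (hA0 _ z b)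
  set S : ℕ → Finset V := fun n => Finset.univ.filter (fun z => 0 < P n x z) with hS
  have hmemS : ∀ n z, z ∈ S n ↔ 0 < P n x z := by
    intro n z; simp [hS]
  have hstep : ∀ n z w, z ∈ S n → 0 < A (n + 1) z w → w ∈ S (n + 1) := by
    intro n z w hz hA
    rw [hmemS] at hz ⊢
    rw [hPs, Matrix.mul_apply]
    have hle : P n x z * A (n + 1) z w ≤ ∑ u, P n x u * A (n + 1) u w :=
      Finset.single_le_sum (fun u _ => mul_nonneg (hPnn n x u) (hA0 _ u w))
        (Finset.mem_univ z)
    exact lt_of_lt_of_le (mul_pos hz hA) hle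
  have hmono : ∀ n, S n ⊆ S (n + 1) := by
    intro n z hz
    exact hstep n z z hz (hAdiag (n + 1) z)
  have hxS : ∀ n, x ∈ S n := by
    intro n
    induction n with
    | zero => rw [hmemS, hP0, Matrix.one_apply_eq]; norm_num
    | succ n ih => exact hmono n ih
  have hcard : ∀ n, S n = Finset.univ ∨ n + 1 ≤ (S n).card := by
    intro n
    induction n with
    | zero =>
      right
      exact Finset.Nonempty.card_pos ⟨x, hxS 0⟩
    | succ n ih =>
      rcases ih with h | h
      · left
        exact Finset.eq_univ_of_forall fun z => hmono n (h ▸ Finset.mem_univ z)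
      · by_cases hU : S n = Finset.univ
        · left
          apply Finset.eq_univ_of_forall
          intro z
          exact hmono n (hU ▸ Finset.mem_univ z)
        · obtain ⟨u, hu, v, hv, hA⟩ := hcross (n + 1) (S n) ⟨x, hxS n⟩ hU
          have hss : S n ⊂ S (n + 1) :=
            ⟨hmono n, fun hsub => hv (hsub (hstep n u v hu hA))⟩
          have := Finset.card_lt_card hss
          omega
  rcases hcard (Fintype.card V) with h | h
  · rw [← hmemS]
    rw [h]
    exact Finset.mem_univ y
  · exfalso
    have := Finset.card_le_univ (S (Fintype.card V))
    omega

/-- If K is irreducible with positive diagonal on a set with N elements, then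
K_{0,N}(x,y) > 0 for all x, y, for any bijection g. -/
theorem stmt6 {V : Type*} [Fintype V] [DecidableEq V] [Nonempty V]
    (K : Matrix V V ℝ)
    (hK0 : ∀ x y, 0 ≤ K x y) (hK1 : ∀ x, ∑ y, K x y = 1)
    (hirr : ∀ x y : V, ∃ n : ℕ, 0 < (K ^ n) x y)
    (hdiag : ∀ x, 0 < K x x)
    (g : Equiv.Perm V)
    (N : ℕ) (hN : N = Fintype.card V) :
    ∀ x y : V, 0 < Kcomp K g N x y := by
  subst hN
  refine prod_pos_aux (Kseq K g) (Kcomp K g) rfl (fun n => rfl)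
    (fun i x y => hK0 _ _) (fun i x => hdiag _) ?_
  intro i S hSne hSU
  set σ := (g ^ (i - 1)) with hσ
  have hcard : (S.image σ).card = S.card := Finset.card_image_of_injective S σ.injective
  have hTne : (S.image σ).Nonempty := hSne.image σ
  have hTU : S.image σ ≠ Finset.univ := by
    intro h
    apply hSU
    apply Finset.eq_univ_of_card
    rw [← hcard, h, Finset.card_univ]
  obtain ⟨u', hu', v', hv', hK⟩ := cross_of_irr K hK0 hirr (S.image σ) hTne hTU
  obtain ⟨u, hu, rfl⟩ := Finset.mem_image.mp hu'
  refine ⟨u, hu, σ.symm v', ?_, ?_⟩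
  · intro hmem
    exact hv' (Finset.mem_image.mpr ⟨σ.symm v', hmem, σ.apply_symm_apply v'⟩)
  · show 0 < K (σ u) (σ (σ.symm v'))
    rwa [σ.apply_symm_apply]
end

section
/- Suppose Q is a symmetric Markov kernel on V, K = Q + Δ_A satisfies K(x,y) ≥ (1−ε)Q(x,y) for all x,y, and \tilde{π} is an invariant probability measure for \tilde{K}(x,y) = K(x,g^{-1}y) with max_x \tilde{π}(x) ≤ c·min_x \tilde{π}(x). Then the Dirichlet forms satisfy E_{Q_g^* Q_g, u}(f,f) ≤ (c/(1−ε)²) · E_{\tilde{K}^* \tilde{K}, \tilde{π}}(f,f) for every function f : V → ℝ, where u is the uniform probability measure on V and Q_g(x,y) = Q(g^{-1}x, g^{-1}y). -/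
open BigOperators Finset Matrix

/-- Dirichlet form of a kernel P reversible w.r.t. ν:
E_{P,ν}(f,f) = (1/2) ∑_{x,y} |f(x)-f(y)|² P(x,y) ν(x). -/
noncomputable def dirichletForm {V : Type*} [Fintype V] (P : Matrix V V ℝ) (ν : V → ℝ) (f : V → ℝ) : ℝ :=
  (1 / 2) * ∑ x, ∑ y, (f x - f y) ^ 2 * P x y * ν x

/-- Lemma 4.1 (Dirichlet form comparison): with K ≥ (1-ε)Q entrywise,
u uniform, π̃ invariant for K̃ with max π̃ ≤ c min π̃,
E_{Q_g*Q_g,u}(f,f) ≤ (c/(1-ε)²) E_{K̃*K̃,π̃}(f,f). -/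
theorem stmt8 {V : Type*} [Fintype V] [Nonempty V]
    (Q K : Matrix V V ℝ) (g : Equiv.Perm V) (ε : ℝ) (hε : ε ∈ Set.Ioo (0:ℝ) 1)
    (hQ0 : ∀ x y, 0 ≤ Q x y) (hQ1 : ∀ x, ∑ y, Q x y = 1)
    (hQsymm : ∀ x y, Q x y = Q y x)
    (hK0 : ∀ x y, 0 ≤ K x y) (hK1 : ∀ x, ∑ y, K x y = 1)
    (hKQ : ∀ x y, (1 - ε) * Q x y ≤ K x y)
    (π : V → ℝ) (hπpos : ∀ x, 0 < π x) (hπ1 : ∑ x, π x = 1)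
    (hinv : ∀ y, ∑ x, π x * tilde K g x y = π y)
    (c : ℝ) (hc : ∀ x y : V, π x ≤ c * π y)
    (u : V → ℝ) (hu : ∀ x, u x = 1 / Fintype.card V)
    (Qg : Matrix V V ℝ) (hQg : ∀ x y, Qg x y = Q (g.symm x) (g.symm y))
    (Kstar : Matrix V V ℝ) (hKstar : ∀ x y, Kstar x y = π y * tilde K g y x / π x) :
    ∀ f : V → ℝ,
      dirichletForm (Qg.transpose * Qg) u f ≤
        (c / (1 - ε) ^ 2) * dirichletForm (Kstar * tilde K g) π f := by

  intro f
  obtain ⟨hε0, hε1⟩ := hε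
  have h1ε : (0:ℝ) < 1 - ε := by linarith
  have hc0 : (0:ℝ) < c := by
    obtain ⟨x0⟩ := ‹Nonempty V›
    nlinarith [hc x0 x0, hπpos x0]
  have hcard : (0:ℝ) < Fintype.card V := by
    exact_mod_cast Fintype.card_pos
  have hN : ∀ z, (1:ℝ) / Fintype.card V ≤ c * π z := by
    intro z
    rw [div_le_iff₀ hcard]
    calc (1:ℝ) = ∑ x, π x := hπ1.symm
      _ ≤ ∑ _x : V, c * π z := Finset.sum_le_sum (fun x _ => hc x z)
      _ = Fintype.card V * (c * π z) := by
          rw [Finset.sum_const, nsmul_eq_mul, Finset.card_univ]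
      _ = c * π z * Fintype.card V := by ring
  have main : ∀ x y : V, (f x - f y)^2 * (Qg.transpose * Qg) x y * u x ≤
      (c / (1 - ε) ^ 2) * ((f x - f y)^2 * (Kstar * tilde K g) x y * π x) := by
    intro x y
    have hs : (0:ℝ) ≤ (f x - f y)^2 := sq_nonneg _
    have hL : (Qg.transpose * Qg) x y = ∑ z, Q z (g.symm x) * Q z (g.symm y) := by
      simp only [Matrix.mul_apply, Matrix.transpose_apply, hQg]
      exact Equiv.sum_comp g.symm (fun z => Q z (g.symm x) * Q z (g.symm y))
    have hR : (Kstar * tilde K g) x y * π x = ∑ z, π z * (K z (g.symm x) * K z (g.symm y)) := by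
      rw [Matrix.mul_apply, Finset.sum_mul]
      refine Finset.sum_congr rfl (fun z _ => ?_)
      rw [hKstar]
      simp only [tilde, Matrix.of_apply]
      field_simp [(hπpos x).ne']
    rw [hL, hu, mul_assoc ((f x - f y)^2) ((Kstar * tilde K g) x y) (π x), hR,
      Finset.mul_sum, Finset.sum_mul, Finset.mul_sum, Finset.mul_sum]
    refine Finset.sum_le_sum (fun z _ => ?_)
    have ha := hQ0 z (g.symm x)
    have hb := hQ0 z (g.symm y)
    have h2 : ((1-ε) * Q z (g.symm x)) * ((1-ε) * Q z (g.symm y)) ≤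
        K z (g.symm x) * K z (g.symm y) :=
      mul_le_mul (hKQ z (g.symm x)) (hKQ z (g.symm y))
        (by positivity) (hK0 z (g.symm x))
    have hNz := hN z
    have hπz := hπpos z
    rw [div_mul_eq_mul_div, le_div_iff₀ (by positivity : (0:ℝ) < (1-ε)^2)]
    nlinarith [mul_le_mul_of_nonneg_left h2 (mul_nonneg (mul_nonneg hc0.le hπz.le) hs),
      mul_le_mul_of_nonneg_right hNz
        (mul_nonneg (by positivity : (0:ℝ) ≤ (1-ε)^2)
          (mul_nonneg hs (mul_nonneg ha hb)))]
  simp only [dirichletForm]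
  calc (1/2 : ℝ) * ∑ x, ∑ y, (f x - f y)^2 * (Qg.transpose * Qg) x y * u x
      ≤ (1/2 : ℝ) * ∑ x, ∑ y, (c / (1 - ε) ^ 2) *
          ((f x - f y)^2 * (Kstar * tilde K g) x y * π x) := by
        exact mul_le_mul_of_nonneg_left
          (Finset.sum_le_sum fun x _ => Finset.sum_le_sum fun y _ => main x y)
          (by norm_num)
    _ = (c / (1 - ε) ^ 2) * ((1/2) * ∑ x, ∑ y,
          (f x - f y)^2 * (Kstar * tilde K g) x y * π x) := by
        simp only [← Finset.mul_sum]; ring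
end

section
/- Assume \tilde{π} ≠ u (uniform) and \tilde{K} is irreducible. Let M = max_x \tilde{π}(x), m = min_x \tilde{π}(x), A*_+ = {x : ∑_y \tilde{K}(y,x) > 1}, A*_- = {x : ∑_y \tilde{K}(y,x) < 1}. Then there exist x_+ ∈ A*_+ and x_- ∈ A*_- with \tilde{π}(x_+) = M and \tilde{π}(x_-) = m. -/
open BigOperators Finset

private lemma stmt10_pow_nonneg {V : Type*} [Fintype V] [DecidableEq V]
    (tK : Matrix V V ℝ) (h0 : ∀ x y, 0 ≤ tK x y) :
    ∀ (n : ℕ) (x y : V), 0 ≤ (tK ^ n) x y := by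
  intro n
  induction n with
  | zero =>
      intro x y
      rw [pow_zero, Matrix.one_apply]
      split <;> norm_num
  | succ n ih =>
      intro x y
      rw [pow_succ, Matrix.mul_apply]
      exact Finset.sum_nonneg fun z _ => mul_nonneg (ih x z) (h0 z y)

private lemma stmt10_closure {V : Type*} [Fintype V] [DecidableEq V]
    (tK : Matrix V V ℝ) (h0 : ∀ x y, 0 ≤ tK x y) (P : V → Prop)
    (hP : ∀ y x, 0 < tK y x → P x → P y) :
    ∀ (n : ℕ) (y x : V), 0 < (tK ^ n) y x → P x → P y := by
  intro n
  induction n with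
  | zero =>
      intro y x h hx
      rw [pow_zero, Matrix.one_apply] at h
      split at h
      · next he => exact he ▸ hx
      · norm_num at h
  | succ n ih =>
      intro y x h hx
      rw [pow_succ', Matrix.mul_apply] at h
      have : ∃ z ∈ Finset.univ, (0 : ℝ) < tK y z * (tK ^ n) z x := by
        by_contra hc
        push_neg at hc
        have : ∑ z, tK y z * (tK ^ n) z x ≤ 0 :=
          Finset.sum_nonpos fun z _ => hc z (mem_univ z)
        linarith
      obtain ⟨z, -, hz⟩ := this
      have h1 : 0 < tK y z := by
        rcases lt_or_eq_of_le (h0 y z) with h' | h'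
        · exact h'
        · rw [← h'] at hz; simp at hz
      have h2 : 0 < (tK ^ n) z x := by
        rcases lt_or_eq_of_le (stmt10_pow_nonneg tK h0 n z x) with h' | h'
        · exact h'
        · rw [← h'] at hz; simp at hz
      exact hP y z h1 (ih z x h2 hx)

private lemma stmt10_allConst {V : Type*} [Fintype V] [DecidableEq V] [Nonempty V]
    (tK : Matrix V V ℝ) (h0 : ∀ x y, 0 ≤ tK x y)
    (hirr : ∀ x y : V, ∃ n : ℕ, 0 < (tK ^ n) x y)
    (π : V → ℝ) (hπ1 : ∑ x, π x = 1) (c : ℝ) (x0 : V) (hx0 : π x0 = c)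
    (hstep : ∀ x, π x = c → ∀ y, 0 < tK y x → π y = c) :
    π = fun _ => (1 : ℝ) / Fintype.card V := by
  have hc : ∀ y, π y = c := by
    intro y
    obtain ⟨n, hn⟩ := hirr y x0
    exact stmt10_closure tK h0 (fun v => π v = c)
      (fun a b hab hb => hstep b hb a hab) n y x0 hn hx0
  have hcard : (0 : ℝ) < Fintype.card V := by
    exact_mod_cast Fintype.card_pos
  have hsum : (Fintype.card V : ℝ) * c = 1 := by
    rw [← hπ1]
    rw [Finset.sum_congr rfl fun z _ => hc z]
    simp [Finset.card_univ, mul_comm]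
  funext y
  rw [hc y]
  field_simp
  linarith [hsum]

/-- Lemma 4.4: if π̃ ≠ u and K̃ is irreducible, then the max of π̃ is attained at a
point with column sum > 1 and the min at a point with column sum < 1. -/
theorem stmt10 {V : Type*} [Fintype V] [DecidableEq V] [Nonempty V]
    (tK : Matrix V V ℝ)
    (htK0 : ∀ x y, 0 ≤ tK x y) (htK1 : ∀ x, ∑ y, tK x y = 1)
    (hirr : ∀ x y : V, ∃ n : ℕ, 0 < (tK ^ n) x y)
    (π : V → ℝ) (hπ0 : ∀ x, 0 ≤ π x) (hπ1 : ∑ x, π x = 1)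
    (hinv : ∀ y, ∑ x, π x * tK x y = π y)
    (hne : π ≠ fun _ => (1 : ℝ) / Fintype.card V) :
    (∃ xp : V, (1 : ℝ) < ∑ y, tK y xp ∧ ∀ z, π z ≤ π xp) ∧
      (∃ xm : V, (∑ y, tK y xm) < 1 ∧ ∀ z, π xm ≤ π z) := by
  obtain ⟨xp, -, hxp⟩ := Finset.exists_max_image Finset.univ π
    ⟨Classical.arbitrary V, mem_univ _⟩
  obtain ⟨xm, -, hxm⟩ := Finset.exists_min_image Finset.univ π
    ⟨Classical.arbitrary V, mem_univ _⟩
  constructor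
  · by_contra hcon
    push_neg at hcon
    apply hne
    refine stmt10_allConst tK htK0 hirr π hπ1 (π xp) xp rfl ?_
    intro x hx y hy
    have hmax : ∀ z, π z ≤ π x := fun z => hx ▸ hxp z (mem_univ z)
    have hsum : ∑ z, tK z x ≤ 1 := by
      by_contra hs
      push_neg at hs
      obtain ⟨z, hz⟩ := hcon x hs
      exact absurd (hmax z) (not_le.mpr hz)
    have hterm : ∀ z ∈ Finset.univ, 0 ≤ (π x - π z) * tK z x :=
      fun z _ => mul_nonneg (sub_nonneg.mpr (hmax z)) (htK0 z x)
    have hsum0 : ∑ z, (π x - π z) * tK z x = 0 := by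
      have h1 : ∑ z, (π x - π z) * tK z x
          = π x * (∑ z, tK z x) - π x := by
        rw [Finset.mul_sum, ← hinv x, ← Finset.sum_sub_distrib]
        exact Finset.sum_congr rfl fun z _ => by ring
      have h2 : π x * (∑ z, tK z x) - π x ≤ 0 := by
        nlinarith [hπ0 x, hmax xp]
      exact le_antisymm (h1 ▸ h2) (Finset.sum_nonneg hterm)
    have hz := (Finset.sum_eq_zero_iff_of_nonneg hterm).mp hsum0 y (mem_univ y)
    have : π x - π y = 0 := by
      rcases mul_eq_zero.mp hz with h | h
      · exact h
      · exact absurd h (ne_of_gt hy)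
    linarith [hx, this]
  · by_contra hcon
    push_neg at hcon
    apply hne
    refine stmt10_allConst tK htK0 hirr π hπ1 (π xm) xm rfl ?_
    intro x hx y hy
    have hmin : ∀ z, π x ≤ π z := fun z => hx ▸ hxm z (mem_univ z)
    have hsum : 1 ≤ ∑ z, tK z x := by
      by_contra hs
      push_neg at hs
      obtain ⟨z, hz⟩ := hcon x hs
      exact absurd (hmin z) (not_le.mpr hz)
    have hterm : ∀ z ∈ Finset.univ, 0 ≤ (π z - π x) * tK z x :=
      fun z _ => mul_nonneg (sub_nonneg.mpr (hmin z)) (htK0 z x)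
    have hsum0 : ∑ z, (π z - π x) * tK z x = 0 := by
      have h1 : ∑ z, (π z - π x) * tK z x
          = π x - π x * (∑ z, tK z x) := by
        rw [Finset.mul_sum, ← hinv x, ← Finset.sum_sub_distrib]
        exact Finset.sum_congr rfl fun z _ => by ring
      have h2 : π x - π x * (∑ z, tK z x) ≤ 0 := by
        nlinarith [hπ0 x]
      exact le_antisymm (h1 ▸ h2) (Finset.sum_nonneg hterm)
    have hz := (Finset.sum_eq_zero_iff_of_nonneg hterm).mp hsum0 y (mem_univ y)
    have : π y - π x = 0 := by
      rcases mul_eq_zero.mp hz with h | h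
      · exact h
      · exact absurd h (ne_of_gt hy)
    linarith [hx, this]
end
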